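/- Let G be a connected finite simple graph, let H be a finite simple graph, and let φ : V(H) → V(G) be an injective map such that the superposition F = G ⊕_φ H is edge 2-connected. Then for every pendant biconnected component G' of G there exists x ∈ V(H) with φ(x) ∈ V(G'). -/

import Mathlib

open SimpleGraph

/-- The superposition `G ⊕_φ H` of `G` and `H` with respect to an injective map
`φ : V(H) ↪ V(G)`. -/
def superpose {α β : Type*} (G : SimpleGraph α) (H : SimpleGraph β) (φ : β ↪ α) :
    SimpleGraph α :=
  G ⊔ SimpleGraph.map φ H

/-- A graph is edge 2-connected if it is connected and has no bridge. -/
def TwoEdgeConnected {α : Type*} (G : SimpleGraph α) : Prop :=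
  G.Connected ∧ ∀ e : Sym2 α, ¬ G.IsBridge e

/-- The graph obtained from `G` by deleting all its bridges; its connected
components are the biconnected components of `G`. -/
def bicompGraph {α : Type*} (G : SimpleGraph α) : SimpleGraph α :=
  G.deleteEdges {e | G.IsBridge e}

/-- A biconnected component `C` of `G` is pendant if exactly one bridge of `G` has an
endpoint in `C`. -/
def IsPendant {α : Type*} (G : SimpleGraph α)
    (C : (bicompGraph G).ConnectedComponent) : Prop :=
  ∃! e : Sym2 α, G.IsBridge e ∧ ∃ v ∈ C.supp, v ∈ e

/-- Let `G` be connected and `φ : V(H) ↪ V(G)` injective such that `F = G ⊕_φ H` is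
edge 2-connected. Then every pendant biconnected component of `G` contains a vertex
of `φ(V(H))`. -/
theorem stmt8 {α β : Type*} [Fintype α] [Fintype β]
    (G : SimpleGraph α) (hG : G.Connected) (H : SimpleGraph β) (φ : β ↪ α)
    (hF : TwoEdgeConnected (superpose G H φ)) :
    ∀ C : (bicompGraph G).ConnectedComponent, IsPendant G C →
      ∃ x : β, φ x ∈ C.supp := by
  intro C hP
  by_contra h
  push_neg at h
  obtain ⟨e, ⟨heB, u, hu, hue⟩, huniq⟩ := hP
  obtain ⟨v, rfl⟩ := Sym2.mem_iff_exists.mp hue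
  have hadj : G.Adj u v := heB.reachable_iff_adj.mp (hG.preconnected u v)
  have hnr : ¬(G \ SimpleGraph.fromEdgeSet {s(u, v)}).Reachable u v :=
    isBridge_iff.mp heB
  -- v is outside C
  have hvC : v ∉ C.supp := by
    intro hv
    apply hnr
    have hreach : (bicompGraph G).Reachable u v := by
      rw [ConnectedComponent.mem_supp_iff] at hu hv
      exact ConnectedComponent.eq.mp (hu.trans hv.symm)
    refine hreach.mono ?_
    intro a b hab
    rw [bicompGraph, deleteEdges_adj] at hab
    rw [sdiff_adj, fromEdgeSet_adj]
    refine ⟨hab.1, fun hc => hab.2 ?_⟩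
    have : s(a, b) = s(u, v) := Set.mem_singleton_iff.mp hc.1
    rw [Set.mem_setOf_eq, this]
    exact heB
  -- any edge of F crossing the boundary of C is s(u,v)
  have hcross : ∀ a b, (superpose G H φ).Adj a b → a ∈ C.supp → b ∉ C.supp →
      s(a, b) = s(u, v) := by
    intro a b hab haC hbC
    rw [superpose, sup_adj] at hab
    rcases hab with hg | hm
    · have hbr : G.IsBridge s(a, b) := by
        by_contra hnb
        apply hbC
        have hadj' : (bicompGraph G).Adj a b := by
          rw [bicompGraph, deleteEdges_adj]
          exact ⟨hg, hnb⟩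
        rw [ConnectedComponent.mem_supp_iff] at haC ⊢
        rw [← haC]
        exact ConnectedComponent.eq.mpr hadj'.symm.reachable
      exact huniq s(a, b) ⟨hbr, a, haC, Sym2.mem_mk_left a b⟩
    · rw [map_adj] at hm
      obtain ⟨x, y, -, hx, -⟩ := hm
      exact absurd (hx ▸ haC) (h x)
  -- s(u,v) is a bridge of F
  have hbridgeF : (superpose G H φ).IsBridge s(u, v) := by
    rw [isBridge_iff]
    show ¬(superpose G H φ \ fromEdgeSet {s(u, v)}).Reachable u v
    · rintro ⟨W⟩
      obtain ⟨d, _, hdf, hds⟩ := W.exists_boundary_dart C.supp hu hvC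
      have hda := d.adj
      rw [sdiff_adj, fromEdgeSet_adj] at hda
      exact hda.2 ⟨Set.mem_singleton_iff.mpr (hcross _ _ hda.1 hdf hds), hda.1.ne⟩
  exact hF.2 _ hbridgeF
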